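/- arXiv:1610.02578 — 7 statements merged into one kernel-verified Lean document; each statement's English description precedes it below -/
import Mathlib

section
/- In any t-defect correcting design over an alphabet of size q >= 2, any two left vertices of degree exactly t have disjoint neighborhoods. -/
open Finset

/-- A bipartite graph `A : K → M → Bool` is a `t`-defect correcting design over an
alphabet of size `q` if for every `q`-coloring of the left vertices there is a
`q`-coloring of the right vertices such that every left vertex has at least `t`
same-colored right-neighbors. -/
def Correcting (q t : ℕ) {K M : Type*} [Fintype K] [Fintype M]
    (A : K → M → Bool) : Prop :=
  ∀ c : K → Fin q, ∃ r : M → Fin q, ∀ i : K,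
    t ≤ (Finset.univ.filter (fun j : M => A i j ∧ r j = c i)).card

/-- Degree of a left vertex. -/
def ldeg {K M : Type*} [Fintype K] [Fintype M] (A : K → M → Bool) (i : K) : ℕ :=
  (Finset.univ.filter (fun j : M => A i j)).card

/-- Total number of edges. -/
def edges {K M : Type*} [Fintype K] [Fintype M] (A : K → M → Bool) : ℕ :=
  ∑ i : K, ldeg A i

/-- In any `t`-defect correcting design over an alphabet of size `q ≥ 2`,
two distinct left vertices of degree exactly `t` have disjoint neighborhoods. -/
theorem degree_t_disjoint_neighborhoods {K M : Type*} [Fintype K] [Fintype M]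
    {q t : ℕ} (hq : 2 ≤ q) (A : K → M → Bool) (h : Correcting q t A)
    (i i' : K) (hne : i ≠ i') (hi : ldeg A i = t) (hi' : ldeg A i' = t) :
    ∀ j : M, ¬(A i j ∧ A i' j) := by
  classical
  intro j hj
  have h0 : (0:ℕ) < q := by omega
  have h1 : (1:ℕ) < q := by omega
  set c : K → Fin q := fun k => if k = i then ⟨0, h0⟩ else ⟨1, h1⟩ with hc
  obtain ⟨r, hr⟩ := h c
  have key : ∀ k : K, ldeg A k = t →
      ∀ j' : M, A k j' → r j' = c k := by
    intro k hk j' hAj'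
    have hsub : (Finset.univ.filter (fun j : M => A k j ∧ r j = c k)) ⊆
        (Finset.univ.filter (fun j : M => A k j)) := by
      intro x hx
      simp only [mem_filter] at hx ⊢
      exact ⟨hx.1, hx.2.1⟩
    have hcard : (Finset.univ.filter (fun j : M => A k j)).card ≤
        (Finset.univ.filter (fun j : M => A k j ∧ r j = c k)).card := by
      have := hr k
      unfold ldeg at hk
      omega
    have heq := Finset.eq_of_subset_of_card_le hsub hcard
    have : j' ∈ (Finset.univ.filter (fun j : M => A k j ∧ r j = c k)) := by
      rw [heq]; simp [hAj']
    simp only [mem_filter] at this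
    exact this.2.2
  have e1 : r j = c i := key i hi j hj.1
  have e2 : r j = c i' := key i' hi' j hj.2
  rw [e1] at e2
  simp only [hc, if_pos rfl, if_neg (Ne.symm hne)] at e2
  exact absurd (congrArg Fin.val e2) (by simp)
end

section
/- If k <= q, then every t-defect correcting design on k left vertices over an alphabet of size q has at least k*t edges, and moreover any such design in which every left vertex has degree exactly t must have all left-neighborhoods pairwise disjoint (i.e., it contains k disjoint copies of K(1,t)). -/
open Finset

/-- If `k ≤ q`, every `t`-defect correcting design on `k` left vertices over an
alphabet of size `q` has at least `k * t` edges, and if moreover every left vertex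
has degree exactly `t` then all left-neighborhoods are pairwise disjoint
(i.e. the design contains `k` disjoint copies of `K(1,t)`). -/
theorem repetition_forced {K M : Type*} [Fintype K] [Fintype M] {q t : ℕ}
    (hkq : Fintype.card K ≤ q) (A : K → M → Bool) (h : Correcting q t A) :
    Fintype.card K * t ≤ edges A ∧
      ((∀ i : K, ldeg A i = t) →
        ∀ i i' : K, i ≠ i' → ∀ j : M, ¬(A i j ∧ A i' j)) := by
  -- choose an injective coloring
  have hcard : Fintype.card K ≤ Fintype.card (Fin q) := by simpa using hkq
  obtain ⟨c⟩ := Function.Embedding.nonempty_of_card_le hcard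
  obtain ⟨r, hr⟩ := h c
  set S : K → Finset M := fun i =>
    Finset.univ.filter (fun j : M => A i j ∧ r j = c i) with hS
  have hsub : ∀ i, S i ⊆ Finset.univ.filter (fun j : M => A i j) := by
    intro i j hj
    simp only [hS, Finset.mem_filter] at hj ⊢
    exact ⟨hj.1, hj.2.1⟩
  have hle : ∀ i, t ≤ (S i).card := hr
  constructor
  · calc Fintype.card K * t = ∑ _i : K, t := by
          rw [Finset.sum_const, smul_eq_mul, Fintype.card, mul_comm]
      _ ≤ ∑ i : K, (S i).card := Finset.sum_le_sum fun i _ => hle i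
      _ ≤ ∑ i : K, ldeg A i :=
          Finset.sum_le_sum fun i _ => Finset.card_le_card (hsub i)
      _ = edges A := rfl
  · intro hdeg i i' hne j hj
    have hSeq : ∀ i0 : K, S i0 = Finset.univ.filter (fun j : M => A i0 j) := by
      intro i0
      apply Finset.eq_of_subset_of_card_le (hsub i0)
      calc (Finset.univ.filter (fun j : M => A i0 j)).card = t := hdeg i0
        _ ≤ (S i0).card := hle i0
    have h1 : j ∈ S i := by rw [hSeq]; simp [hj.1]
    have h2 : j ∈ S i' := by rw [hSeq]; simp [hj.2]
    simp only [hS, Finset.mem_filter] at h1 h2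
    exact hne (c.injective (h1.2.2 ▸ h2.2.2))
end

section
/- Over a binary alphabet, any 1-defect correcting design on k left vertices with E edges and m right vertices satisfies E >= 2k - m. -/
open Finset

/-- Over a binary alphabet, any 1-defect correcting design on `k` left vertices
with `E` edges and `m` right vertices satisfies `E ≥ 2k - m`. -/
theorem binary_t1_edge_bound {K M : Type*} [Fintype K] [Fintype M]
    (A : K → M → Bool) (h : Correcting 2 1 A) :
    2 * Fintype.card K ≤ edges A + Fintype.card M := by
  classical
  -- every left vertex has degree ≥ 1
  have hdeg : ∀ i, 1 ≤ ldeg A i := by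
    intro i
    obtain ⟨r, hr⟩ := h (fun _ => 0)
    refine le_trans (hr i) (Finset.card_le_card ?_)
    intro j hj
    simp only [mem_filter, mem_univ, true_and] at hj ⊢
    exact hj.1
  -- neighbor function
  have hnon : ∀ i, (Finset.univ.filter (fun j : M => A i j)).Nonempty := by
    intro i
    rw [← Finset.card_pos]
    exact hdeg i
  set f : K → M := fun i => (hnon i).choose with hf
  have hfA : ∀ i, A i (f i) := by
    intro i
    have := (hnon i).choose_spec
    simp only [mem_filter, mem_univ, true_and] at this
    exact this
  have huniq : ∀ i, ldeg A i = 1 → ∀ j, A i j → j = f i := by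
    intro i hi j hj
    obtain ⟨a, ha⟩ := Finset.card_eq_one.mp hi
    have h1 : j ∈ Finset.univ.filter (fun j : M => A i j) := by simp [hj]
    have h2 : f i ∈ Finset.univ.filter (fun j : M => A i j) := by simp [hfA i]
    rw [ha, Finset.mem_singleton] at h1 h2
    rw [h1, h2]
  -- degree-1 vertices map injectively to M
  set S : Finset K := Finset.univ.filter (fun i => ldeg A i = 1) with hS
  have hinj : ∀ i₁ ∈ S, ∀ i₂ ∈ S, f i₁ = f i₂ → i₁ = i₂ := by
    intro i₁ h₁ i₂ h₂ hfe
    by_contra hne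
    simp only [hS, mem_filter, mem_univ, true_and] at h₁ h₂
    obtain ⟨r, hr⟩ := h (fun x => if x = i₁ then 0 else 1)
    have key : ∀ i, i ∈ ({i₁, i₂} : Finset K) → ldeg A i = 1 →
        r (f i) = (if i = i₁ then (0 : Fin 2) else 1) := by
      intro i _ hi
      have := hr i
      rw [Finset.one_le_card] at this
      obtain ⟨j, hj⟩ := this
      simp only [mem_filter, mem_univ, true_and] at hj
      have := huniq i hi j hj.1
      rw [← this]
      exact hj.2
    have k1 := key i₁ (by simp) h₁
    have k2 := key i₂ (by simp) h₂
    rw [hfe] at k1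
    rw [if_pos rfl] at k1
    rw [if_neg (fun e => hne e.symm)] at k2
    rw [k1] at k2
    exact absurd k2 (by decide)
  have hScard : S.card ≤ Fintype.card M := by
    have := Finset.card_le_card_of_injOn f (fun i _ => Finset.mem_univ (f i)) hinj
    exact this
  -- combine
  have hmain : 2 * Fintype.card K ≤ edges A + S.card := by
    have : ∀ i : K, 2 ≤ ldeg A i + (if ldeg A i = 1 then 1 else 0) := by
      intro i
      by_cases hi : ldeg A i = 1
      · rw [hi, if_pos rfl]
      · have h2 : 2 ≤ ldeg A i := Nat.lt_of_le_of_ne (hdeg i) (Ne.symm hi)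
        rw [if_neg hi]
        omega
    calc 2 * Fintype.card K = ∑ _i : K, 2 := by
          rw [Finset.sum_const, smul_eq_mul, mul_comm]
          rfl
      _ ≤ ∑ i : K, (ldeg A i + if ldeg A i = 1 then 1 else 0) :=
          Finset.sum_le_sum (fun i _ => this i)
      _ = edges A + S.card := by
          rw [Finset.sum_add_distrib, hS, Finset.card_filter]
          rfl
  exact hmain.trans (Nat.add_le_add_left hScard _)
end

section
/- Over a binary alphabet, any 2-defect correcting design on k left vertices with E edges and m right vertices satisfies E >= 4k - m; equivalently E/(2k) >= 2 - m/(2k). -/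
open Finset

/-- Over a binary alphabet, any 2-defect correcting design on `k` left vertices
with `E` edges and `m` right vertices satisfies `E ≥ 4k - m`, i.e.
`E/(2k) ≥ 2 - m/(2k)`. -/
theorem binary_t2_edge_bound {K M : Type*} [Fintype K] [Fintype M]
    (A : K → M → Bool) (h : Correcting 2 2 A) :
    4 * Fintype.card K ≤ edges A + Fintype.card M := by
  classical
  choose r hr using h
  -- neighborhoods
  set N : K → Finset M := fun i => univ.filter (fun j => A i j) with hN
  have hNcard : ∀ i, (N i).card = ldeg A i := fun i => rfl
  have hGsub : ∀ (c : K → Fin 2) (i : K),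
      (univ.filter (fun j : M => A i j ∧ r c j = c i)) ⊆ N i := by
    intro c i j hj
    simp only [hN, mem_filter] at hj ⊢
    exact ⟨hj.1, hj.2.1⟩
  -- every degree is at least 2
  have hdeg2 : ∀ i, 2 ≤ ldeg A i := by
    intro i
    have := hr (fun _ => 0) i
    calc 2 ≤ _ := this
    _ ≤ (N i).card := card_le_card (hGsub _ i)
    _ = ldeg A i := hNcard i
  -- degree-2 vertices force the color of both their neighbors
  have hforce : ∀ (c : K → Fin 2) (i : K), ldeg A i = 2 →
      ∀ j : M, A i j → r c j = c i := by
    intro c i h2 j hAij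
    have hsub := hGsub c i
    have hcard : (N i).card ≤ (univ.filter (fun j : M => A i j ∧ r c j = c i)).card := by
      rw [hNcard i, h2]; exact hr c i
    have heq := Finset.eq_of_subset_of_card_le hsub hcard
    have hjN : j ∈ N i := by simp [hN, hAij]
    rw [← heq] at hjN
    simp only [mem_filter] at hjN
    exact hjN.2.2
  -- distinguishing: equal responses force equal colors at small-degree vertices
  have hdistinct : ∀ (c c' : K → Fin 2) (i : K), ldeg A i ≤ 3 →
      r c = r c' → c i = c' i := by
    intro c c' i h3 hrr
    by_contra hne
    set G := univ.filter (fun j : M => A i j ∧ r c j = c i) with hG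
    set G' := univ.filter (fun j : M => A i j ∧ r c' j = c' i) with hG'
    have hdisj : Disjoint G G' := by
      rw [Finset.disjoint_left]
      intro j hjG hjG'
      simp only [hG, hG', mem_filter] at hjG hjG'
      apply hne
      rw [← hjG.2.2, ← hjG'.2.2, hrr]
    have hcup : (G ∪ G').card ≤ (N i).card :=
      card_le_card (union_subset (hGsub c i) (hGsub c' i))
    rw [Finset.card_union_of_disjoint hdisj] at hcup
    have h1 : 2 ≤ G.card := hr c i
    have h2 : 2 ≤ G'.card := hr c' i
    rw [hNcard i] at hcup
    omega
  -- degree-2 vertices have pairwise disjoint neighborhoods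
  have hpairdisj : ∀ i i' : K, i ≠ i' → ldeg A i = 2 → ldeg A i' = 2 →
      Disjoint (N i) (N i') := by
    intro i i' hne h2 h2'
    rw [Finset.disjoint_left]
    intro j hjN hjN'
    simp only [hN, mem_filter] at hjN hjN'
    set c : K → Fin 2 := fun x => if x = i then 0 else 1 with hc
    have e1 : r c j = c i := hforce c i h2 j hjN.2
    have e2 : r c j = c i' := hforce c i' h2' j hjN'.2
    rw [e1] at e2
    simp only [hc, if_pos rfl, if_neg (Ne.symm hne)] at e2
    exact absurd e2 (by decide)
  -- the small-degree vertex sets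
  set K2 : Finset K := univ.filter (fun i => ldeg A i = 2) with hK2
  set K3 : Finset K := univ.filter (fun i => ldeg A i = 3) with hK3
  set Ks : Finset K := univ.filter (fun i => ldeg A i ≤ 3) with hKs
  have hK2Ks : K2 ⊆ Ks := by
    intro i hi
    simp only [hK2, hKs, mem_filter] at hi ⊢
    exact ⟨hi.1, by omega⟩
  -- union of the degree-2 neighborhoods
  set P : Finset M := K2.biUnion (fun i => N i) with hP
  have hPcard : P.card = 2 * K2.card := by
    rw [hP, Finset.card_biUnion]
    · rw [Finset.sum_congr rfl (fun i hi => by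
        simp only [hK2, mem_filter] at hi
        rw [hNcard i, hi.2])]
      simp [mul_comm]
    · intro i hi i' hi' hne
      simp only [hK2, Finset.mem_coe, mem_filter] at hi hi'
      exact hpairdisj i i' hne hi.2 hi'.2
  -- the injection
  set ext : (↥Ks → Fin 2) → (K → Fin 2) :=
    fun c i => if hi : i ∈ Ks then c ⟨i, hi⟩ else 0 with hext
  set F : (↥Ks → Fin 2) → ((↥((univ : Finset M) \ P) → Fin 2) × (↥K2 → Fin 2)) :=
    fun c => (fun j => r (ext c) j.1, fun i => c ⟨i.1, hK2Ks i.2⟩) with hF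
  have hFinj : Function.Injective F := by
    intro c c' hcc
    have hfst := congrArg Prod.fst hcc
    have hsnd := congrArg Prod.snd hcc
    simp only [hF] at hfst hsnd
    have hK2eq : ∀ i : K, ∀ hi : i ∈ K2, ext c i = ext c' i := by
      intro i hi
      have := congrFun hsnd ⟨i, hi⟩
      simp only [hext, dif_pos (hK2Ks hi)]
      exact this
    have hrr : r (ext c) = r (ext c') := by
      funext j
      by_cases hjP : j ∈ P
      · rw [hP, Finset.mem_biUnion] at hjP
        obtain ⟨i, hiK2, hjNi⟩ := hjP
        have hAij : A i j := by
          simp only [hN, mem_filter] at hjNi; exact hjNi.2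
        have hi2 : ldeg A i = 2 := by
          simp only [hK2, mem_filter] at hiK2; exact hiK2.2
        rw [hforce (ext c) i hi2 j hAij, hforce (ext c') i hi2 j hAij]
        exact hK2eq i hiK2
      · have hjmem : j ∈ (univ : Finset M) \ P := by simp [hjP]
        exact congrFun hfst ⟨j, hjmem⟩
    funext x
    have hx3 : ldeg A x.1 ≤ 3 := by
      have := x.2
      simp only [hKs, mem_filter] at this
      exact this.2
    have := hdistinct (ext c) (ext c') x.1 hx3 hrr
    simpa only [hext, dif_pos x.2] using this
  have hcards := Fintype.card_le_of_injective F hFinj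
  rw [Fintype.card_fun, Fintype.card_prod, Fintype.card_fun, Fintype.card_fun,
      Fintype.card_fin, Fintype.card_coe, Fintype.card_coe, Fintype.card_coe,
      ← pow_add] at hcards
  have hexp : Ks.card ≤ ((univ : Finset M) \ P).card + K2.card :=
    (Nat.pow_le_pow_iff_right (by norm_num)).mp hcards
  have hsdiff : ((univ : Finset M) \ P).card = Fintype.card M - P.card := by
    rw [Finset.card_sdiff_of_subset (Finset.subset_univ P), Finset.card_univ]
  have hPle : P.card ≤ Fintype.card M := by
    rw [← Finset.card_univ]; exact card_le_card (Finset.subset_univ P)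
  -- Ks = K2 ∪ K3
  have hKscard : Ks.card = K2.card + K3.card := by
    have hunion : Ks = K2 ∪ K3 := by
      ext i
      simp only [hKs, hK2, hK3, mem_filter, mem_union, mem_univ, true_and]
      have := hdeg2 i
      omega
    have hd23 : Disjoint K2 K3 := by
      rw [Finset.disjoint_left]
      intro i hi hi'
      simp only [hK2, hK3, mem_filter] at hi hi'
      omega
    rw [hunion, Finset.card_union_of_disjoint hd23]
  -- the key counting inequality
  have hkey : 2 * K2.card + K3.card ≤ Fintype.card M := by omega
  -- sum it up
  have hpoint : ∀ i : K, 4 ≤ ldeg A i +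
      ((if i ∈ K2 then 2 else 0) + (if i ∈ K3 then 1 else 0)) := by
    intro i
    have := hdeg2 i
    by_cases h2 : ldeg A i = 2 <;> by_cases h3 : ldeg A i = 3 <;>
      simp only [hK2, hK3, mem_filter, mem_univ, true_and, h2, h3, if_true, if_false,
        if_pos, if_neg] <;>
      simp [h2, h3] <;> omega
  have hsum1 : ∑ i : K, (if i ∈ K2 then 2 else 0) = 2 * K2.card := by
    rw [Finset.sum_ite_mem, Finset.univ_inter, Finset.sum_const, smul_eq_mul, mul_comm]
  have hsum2 : ∑ i : K, (if i ∈ K3 then 1 else 0) = K3.card := by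
    rw [Finset.sum_ite_mem, Finset.univ_inter, Finset.sum_const, smul_eq_mul, mul_one]
  have hsumtotal : 4 * Fintype.card K ≤ edges A + (2 * K2.card + K3.card) := by
    calc 4 * Fintype.card K = ∑ _i : K, 4 := by
          rw [Finset.sum_const, smul_eq_mul, Finset.card_univ, mul_comm]
    _ ≤ ∑ i : K, (ldeg A i + ((if i ∈ K2 then 2 else 0) + (if i ∈ K3 then 1 else 0))) :=
          Finset.sum_le_sum (fun i _ => hpoint i)
    _ = edges A + (2 * K2.card + K3.card) := by
          rw [Finset.sum_add_distrib, Finset.sum_add_distrib, hsum1, hsum2]; rfl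
  omega
end

section
/- Covering converse: Let G be a (k,m,t,E)_q t-defect correcting design and for t <= j < qt let pi_j be the fraction of left vertices of degree exactly j, with pi_{qt} the fraction of left vertices of degree at least qt. Then sum over j of pi_j * log_q(floor(j/t)), taken over t+1 <= j <= qt, is at least 1 + (t-1)*pi_t - (m/k); equivalently, q^{m - (t-1) k pi_t} * prod_j floor(j/t)^{k pi_j} >= q^k. -/
open Finset

/-- Covering converse. For a `(k,m,t,E)_q`-design let `n j` (for `t ≤ j < q*t`)
be the number of left vertices of degree exactly `j`, and `n (q*t)` the number of
left vertices of degree at least `q*t`. Then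
`q^(m - (t-1)·n t) · ∏_{j=t+1}^{q t} ⌊j/t⌋^(n j) ≥ q^k`, stated in
subtraction-free form. Dividing by `k` and taking `log_q` this is
`∑_{j=t+1}^{q t} π_j log_q ⌊j/t⌋ ≥ 1 + (t-1)π_t - ρ t`. -/
theorem covering_converse {K M : Type*} [Fintype K] [Fintype M] {q t : ℕ}
    (hq : 2 ≤ q) (ht : 1 ≤ t) (A : K → M → Bool) (h : Correcting q t A)
    (n : ℕ → ℕ)
    (hn : ∀ j, j < q * t → n j = (Finset.univ.filter (fun i : K => ldeg A i = j)).card)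
    (hntop : n (q * t) = (Finset.univ.filter (fun i : K => q * t ≤ ldeg A i)).card) :
    q ^ (Fintype.card K + (t - 1) * n t) ≤
      q ^ (Fintype.card M) * ∏ j ∈ Finset.Icc (t + 1) (q * t), (j / t) ^ (n j) := by
  classical
  have hq0 : 0 < q := by omega
  have ht0 : 0 < t := ht
  have htqt : t < q * t := by nlinarith
  -- L1 : all degrees are at least t
  have hdeg : ∀ i : K, t ≤ ldeg A i := by
    intro i
    obtain ⟨r, hr⟩ := h (fun _ => ⟨0, hq0⟩)
    refine le_trans (hr i) (Finset.card_le_card ?_)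
    intro x hx
    simp only [Finset.mem_filter] at hx ⊢
    exact ⟨hx.1, hx.2.1⟩
  obtain hM | hM := isEmpty_or_nonempty M
  · -- M is empty, hence K is empty
    have hK : IsEmpty K := by
      constructor
      intro i
      have h1 := hdeg i
      have h2 : ldeg A i = 0 := by
        simp [ldeg, Finset.univ_eq_empty]
      omega
    have hk : Fintype.card K = 0 := Fintype.card_eq_zero
    have hnz : ∀ j ∈ Finset.Icc (t + 1) (q * t), (j / t) ^ (n j) = 1 := by
      intro j hj
      simp only [Finset.mem_Icc] at hj
      rcases lt_or_eq_of_le hj.2 with hlt | heq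
      · rw [hn j hlt, Finset.univ_eq_empty, Finset.filter_empty, Finset.card_empty, pow_zero]
      · rw [heq, hntop, Finset.univ_eq_empty, Finset.filter_empty, Finset.card_empty, pow_zero]
    rw [hk, Finset.prod_eq_one hnz]
    have hnt : n t = 0 := by
      rw [hn t htqt, Finset.univ_eq_empty, Finset.filter_empty, Finset.card_empty]
    rw [hnt, mul_zero, mul_one, add_zero, pow_zero]
    exact Nat.one_le_pow _ _ hq0
  · -- Main case : M nonempty
    have : Inhabited M := Classical.inhabited_of_nonempty hM
    -- L3 : if deg i = t and r covers color a at i, then all neighbors of i get color a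
    have hmono : ∀ (r : M → Fin q) (a : Fin q) (i : K), ldeg A i = t →
        t ≤ (Finset.univ.filter (fun j : M => A i j ∧ r j = a)).card →
        ∀ j : M, A i j → r j = a := by
      intro r a i hi hcard j hj
      have hsub : (Finset.univ.filter (fun j : M => A i j ∧ r j = a)) ⊆
          (Finset.univ.filter (fun j : M => A i j)) := by
        intro x hx
        simp only [Finset.mem_filter] at hx ⊢
        exact ⟨hx.1, hx.2.1⟩
      have hcard2 : (Finset.univ.filter (fun j : M => A i j)).card ≤
          (Finset.univ.filter (fun j : M => A i j ∧ r j = a)).card := by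
        have : (Finset.univ.filter (fun j : M => A i j)).card = t := hi
        omega
      have heq := Finset.eq_of_subset_of_card_le hsub hcard2
      have hjmem : j ∈ (Finset.univ.filter (fun j : M => A i j)) := by
        simp only [Finset.mem_filter]
        exact ⟨Finset.mem_univ j, hj⟩
      rw [← heq] at hjmem
      simp only [Finset.mem_filter] at hjmem
      exact hjmem.2.2
    -- neighborhoods
    set N : K → Finset M := fun i => Finset.univ.filter (fun j : M => A i j) with hN
    -- L2 : degree-t vertices have pairwise disjoint neighborhoods
    have hdisjN : ∀ i₁ i₂ : K, i₁ ≠ i₂ → ldeg A i₁ = t → ldeg A i₂ = t →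
        Disjoint (N i₁) (N i₂) := by
      intro i₁ i₂ hne h1 h2
      rw [Finset.disjoint_left]
      intro j hj1 hj2
      simp only [hN, Finset.mem_filter] at hj1 hj2
      set c : K → Fin q := fun i => if i = i₁ then ⟨0, hq0⟩ else ⟨1, hq⟩ with hc
      obtain ⟨r, hr⟩ := h c
      have e1 : r j = c i₁ := hmono r (c i₁) i₁ h1 (hr i₁) j hj1.2
      have e2 : r j = c i₂ := hmono r (c i₂) i₂ h2 (hr i₂) j hj2.2
      have : c i₁ = c i₂ := e1 ▸ e2 ▸ rfl
      simp only [hc, if_pos rfl, if_neg (Ne.symm hne)] at this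
      exact absurd (congrArg Fin.val this) (by simp)
    -- the set of "good" right colorings
    set R : Finset (M → Fin q) := Finset.univ.filter
      (fun r => ∀ i : K, ldeg A i = t → ∀ j j' : M, A i j → A i j' → r j = r j') with hR
    -- colorings covered by r
    set cover : (M → Fin q) → Finset (K → Fin q) := fun r =>
      Finset.univ.filter (fun c => ∀ i : K,
        t ≤ (Finset.univ.filter (fun j : M => A i j ∧ r j = c i)).card) with hcover
    -- Step A : every coloring is covered by some good r
    have hA : (Finset.univ : Finset (K → Fin q)) ⊆ R.biUnion cover := by
      intro c _
      obtain ⟨r, hr⟩ := h c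
      rw [Finset.mem_biUnion]
      refine ⟨r, ?_, ?_⟩
      · rw [hR, Finset.mem_filter]
        refine ⟨Finset.mem_univ r, ?_⟩
        intro i hi j j' hj hj'
        have e := hmono r (c i) i hi (hr i)
        rw [e j hj, e j' hj']
      · rw [hcover, Finset.mem_filter]
        exact ⟨Finset.mem_univ c, hr⟩
    -- Step C : bound on the number of colorings covered by a fixed r
    set P0 : ℕ := ∏ i : K, (min (ldeg A i) (q * t)) / t with hP0
    have hC : ∀ r : M → Fin q, (cover r).card ≤ P0 := by
      intro r
      set Ss : K → Finset (Fin q) := fun i => Finset.univ.filter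
        (fun a : Fin q => t ≤ (Finset.univ.filter (fun j : M => A i j ∧ r j = a)).card) with hSs
      have hsub : cover r ⊆ Fintype.piFinset Ss := by
        intro c hc
        rw [Fintype.mem_piFinset]
        intro i
        rw [hSs]
        simp only [Finset.mem_filter]
        rw [hcover, Finset.mem_filter] at hc
        exact ⟨Finset.mem_univ _, hc.2 i⟩
      have hcard : (cover r).card ≤ ∏ i : K, (Ss i).card := by
        calc (cover r).card ≤ (Fintype.piFinset Ss).card := Finset.card_le_card hsub
          _ = ∏ i : K, (Ss i).card := Fintype.card_piFinset Ss
      refine le_trans hcard (Finset.prod_le_prod' ?_)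
      intro i _
      -- |Ss i| ≤ min (ldeg A i) (q*t) / t
      rw [Nat.le_div_iff_mul_le ht0]
      refine le_min ?_ ?_
      · -- (Ss i).card * t ≤ ldeg A i
        set B : Fin q → Finset M := fun a =>
          Finset.univ.filter (fun j : M => A i j ∧ r j = a) with hB
        have hdisjB : ∀ a ∈ Ss i, ∀ b ∈ Ss i, a ≠ b → Disjoint (B a) (B b) := by
          intro a _ b _ hab
          rw [Finset.disjoint_left]
          intro j hja hjb
          simp only [hB, Finset.mem_filter] at hja hjb
          exact hab (hja.2.2 ▸ hjb.2.2 ▸ rfl)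
        have hU : ((Ss i).biUnion B) ⊆ N i := by
          intro j hj
          rw [Finset.mem_biUnion] at hj
          obtain ⟨a, _, hja⟩ := hj
          simp only [hB, Finset.mem_filter] at hja
          simp only [hN, Finset.mem_filter]
          exact ⟨Finset.mem_univ j, hja.2.1⟩
        calc (Ss i).card * t = ∑ _a ∈ Ss i, t := by rw [Finset.sum_const, smul_eq_mul]
          _ ≤ ∑ a ∈ Ss i, (B a).card := by
              refine Finset.sum_le_sum ?_
              intro a ha
              simp only [hSs, Finset.mem_filter] at ha
              exact ha.2
          _ = ((Ss i).biUnion B).card := (Finset.card_biUnion hdisjB).symm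
          _ ≤ (N i).card := Finset.card_le_card hU
          _ = ldeg A i := rfl
      · -- (Ss i).card * t ≤ q * t
        have : (Ss i).card ≤ q := by
          calc (Ss i).card ≤ (Finset.univ : Finset (Fin q)).card := Finset.card_filter_le _ _
            _ = q := by rw [Finset.card_univ, Fintype.card_fin]
        exact Nat.mul_le_mul_right t this
    -- combine A and C :  q^k ≤ |R| * P0
    have hkbound : q ^ (Fintype.card K) ≤ R.card * P0 := by
      calc q ^ (Fintype.card K) = Fintype.card (K → Fin q) := by
            rw [Fintype.card_fun, Fintype.card_fin]
        _ = (Finset.univ : Finset (K → Fin q)).card := (Finset.card_univ).symm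
        _ ≤ (R.biUnion cover).card := Finset.card_le_card hA
        _ ≤ ∑ r ∈ R, (cover r).card := Finset.card_biUnion_le
        _ ≤ ∑ _r ∈ R, P0 := Finset.sum_le_sum (fun r _ => hC r)
        _ = R.card * P0 := by rw [Finset.sum_const, smul_eq_mul]
    -- Step D : |R| * q^((t-1) * n t) ≤ q^m
    set S : Finset K := Finset.univ.filter (fun i : K => ldeg A i = t) with hS
    have hScard : n t = S.card := hn t htqt
    -- representatives
    set rep : K → M := fun i => if hne : (N i).Nonempty then hne.choose else default with hrep
    have hrepmem : ∀ i ∈ S, rep i ∈ N i := by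
      intro i hi
      have hne : (N i).Nonempty := by
        rw [← Finset.card_pos]
        have heq : (N i).card = ldeg A i := rfl
        rw [heq]
        exact lt_of_lt_of_le ht0 (hdeg i)
      rw [hrep]
      simp only [dif_pos hne]
      exact hne.choose_spec
    set T : Finset M := S.biUnion (fun i => N i \ {rep i}) with hT
    have hdisjT : ∀ i₁ ∈ S, ∀ i₂ ∈ S, i₁ ≠ i₂ →
        Disjoint (N i₁ \ {rep i₁}) (N i₂ \ {rep i₂}) := by
      intro i₁ hi₁ i₂ hi₂ hne
      simp only [hS, Finset.mem_filter] at hi₁ hi₂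
      exact Finset.disjoint_of_subset_left (Finset.sdiff_subset)
        (Finset.disjoint_of_subset_right (Finset.sdiff_subset)
          (hdisjN i₁ i₂ hne hi₁.2 hi₂.2))
    have hTcard : T.card = (t - 1) * S.card := by
      rw [hT, Finset.card_biUnion hdisjT]
      have : ∀ i ∈ S, (N i \ {rep i}).card = t - 1 := by
        intro i hi
        rw [Finset.card_sdiff_of_subset (Finset.singleton_subset_iff.mpr (hrepmem i hi))]
        have h1 : (N i).card = t := by
          simp only [hS, Finset.mem_filter] at hi
          exact hi.2
        rw [h1, Finset.card_singleton]
      rw [Finset.sum_congr rfl this, Finset.sum_const, smul_eq_mul, mul_comm]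
    have hrepT : ∀ i ∈ S, rep i ∉ T := by
      intro i hi hmem
      have hiS := hi
      rw [hT, Finset.mem_biUnion] at hmem
      obtain ⟨i', hi', hmem'⟩ := hmem
      rw [Finset.mem_sdiff, Finset.mem_singleton] at hmem'
      by_cases hii : i = i'
      · exact hmem'.2 (by rw [hii])
      · simp only [hS, Finset.mem_filter] at hi hi'
        have hd := hdisjN i i' hii hi.2 hi'.2
        rw [Finset.disjoint_left] at hd
        exact hd (hrepmem i hiS) hmem'.1
    -- injection
    have hDbound : R.card * q ^ ((t - 1) * S.card) ≤ q ^ (Fintype.card M) := by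
      set Φ : ({r // r ∈ R} × ({x // x ∈ T} → Fin q)) → (M → Fin q) :=
        fun p j => if hj : j ∈ T then p.2 ⟨j, hj⟩ else p.1.1 j with hΦ
      have hinj : Function.Injective Φ := by
        intro p₁ p₂ hpeq
        have hgood : ∀ r ∈ R, ∀ i ∈ S, ∀ j ∈ N i, r j = r (rep i) := by
          intro r hr i hi j hj
          rw [hR, Finset.mem_filter] at hr
          simp only [hS, Finset.mem_filter] at hi
          have hj' : A i j := by simp only [hN, Finset.mem_filter] at hj; exact hj.2
          have hrepj : A i (rep i) := by
            have := hrepmem i (by simp only [hS, Finset.mem_filter]; exact hi)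
            simp only [hN, Finset.mem_filter] at this
            exact this.2
          exact hr.2 i hi.2 j (rep i) hj' hrepj
        have h2 : p₁.2 = p₂.2 := by
          funext x
          have := congrFun hpeq x.1
          simp only [hΦ, dif_pos x.2] at this
          exact this
        have h1 : p₁.1 = p₂.1 := by
          refine Subtype.ext ?_
          funext j
          by_cases hj : j ∈ T
          · rw [hT, Finset.mem_biUnion] at hj
            obtain ⟨i, hi, hji⟩ := hj
            rw [Finset.mem_sdiff] at hji
            have hrnotT := hrepT i hi
            have e1 : p₁.1.1 j = p₁.1.1 (rep i) := hgood p₁.1.1 p₁.1.2 i hi j hji.1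
            have e2 : p₂.1.1 j = p₂.1.1 (rep i) := hgood p₂.1.1 p₂.1.2 i hi j hji.1
            have e3 := congrFun hpeq (rep i)
            simp only [hΦ, dif_neg hrnotT] at e3
            rw [e1, e2, e3]
          · have := congrFun hpeq j
            simp only [hΦ, dif_neg hj] at this
            exact this
        exact Prod.ext h1 h2
      have := Fintype.card_le_of_injective Φ hinj
      rw [Fintype.card_prod, Fintype.card_fun, Fintype.card_fun, Fintype.card_coe,
        Fintype.card_coe, Fintype.card_fin, hTcard] at this
      exact this
    -- Step E : convert P0 to the product over degree classes
    have hP0eq : P0 = ∏ j ∈ Finset.Icc (t + 1) (q * t), (j / t) ^ (n j) := by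
      have hmaps : ∀ i ∈ (Finset.univ : Finset K),
          min (ldeg A i) (q * t) ∈ Finset.Icc t (q * t) := by
        intro i _
        rw [Finset.mem_Icc]
        have := hdeg i
        omega
      have hfib := Finset.prod_fiberwise_of_maps_to hmaps
        (fun i => (min (ldeg A i) (q * t)) / t)
      rw [hP0, ← hfib]
      have hinner : ∀ j ∈ Finset.Icc t (q * t),
          (∏ i ∈ Finset.univ.filter (fun i : K => min (ldeg A i) (q * t) = j),
            (min (ldeg A i) (q * t)) / t) =
          (j / t) ^ ((Finset.univ.filter (fun i : K => min (ldeg A i) (q * t) = j)).card) := by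
        intro j _
        rw [← Finset.prod_const]
        refine Finset.prod_congr rfl ?_
        intro i hi
        rw [Finset.mem_filter] at hi
        rw [hi.2]
      rw [Finset.prod_congr rfl hinner]
      -- now compare the two products over Icc
      have hfibcard : ∀ j ∈ Finset.Icc (t + 1) (q * t),
          (Finset.univ.filter (fun i : K => min (ldeg A i) (q * t) = j)).card = n j := by
        intro j hj
        rw [Finset.mem_Icc] at hj
        rcases lt_or_eq_of_le hj.2 with hlt | heq
        · rw [hn j hlt]
          congr 1
          apply Finset.filter_congr
          intro i _
          constructor
          · intro hmin; omega
          · intro hd; omega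
        · rw [← heq] at hntop ⊢
          rw [hntop]
          congr 1
          apply Finset.filter_congr
          intro i _
          constructor
          · intro hmin; omega
          · intro hd; omega
      rw [show Finset.Icc t (q * t) = insert t (Finset.Icc (t + 1) (q * t)) by
        ext x; simp only [Finset.mem_Icc, Finset.mem_insert]; omega]
      rw [Finset.prod_insert (by simp)]
      rw [Nat.div_self ht0, one_pow, one_mul]
      exact Finset.prod_congr rfl (fun j hj => by rw [hfibcard j hj])
    -- final assembly
    calc q ^ (Fintype.card K + (t - 1) * n t)
        = q ^ (Fintype.card K) * q ^ ((t - 1) * n t) := pow_add q _ _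
      _ ≤ (R.card * P0) * q ^ ((t - 1) * n t) :=
          Nat.mul_le_mul_right _ hkbound
      _ = (R.card * q ^ ((t - 1) * S.card)) * P0 := by rw [hScard]; ring
      _ ≤ q ^ (Fintype.card M) * P0 := Nat.mul_le_mul_right _ hDbound
      _ = q ^ (Fintype.card M) * ∏ j ∈ Finset.Icc (t + 1) (q * t), (j / t) ^ (n j) := by
          rw [hP0eq]
end

section
/- Union bound step of the covering converse: in any t-defect correcting design over an alphabet of size q, for each fixed coloring r of the m right vertices, the number of left-vertex colorings w for which every left vertex has at least t same-colored right-neighbors under (w, r) is at most the product over left vertices v of floor(deg(v)/t). -/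
open Finset

/-- Union bound step of the covering converse: in a `t`-defect correcting design,
for each fixed coloring `r` of the right vertices, the number of left colorings
`w` under which every left vertex has at least `t` same-colored right-neighbors
is at most `∏_v ⌊deg(v)/t⌋`. -/
theorem union_bound_step {K M : Type*} [Fintype K] [DecidableEq K] [Fintype M]
    {q t : ℕ} (ht : 1 ≤ t) (A : K → M → Bool) (h : Correcting q t A)
    (r : M → Fin q) :
    (Finset.univ.filter (fun w : K → Fin q => ∀ i : K,
        t ≤ (Finset.univ.filter (fun j : M => A i j ∧ r j = w i)).card)).card ≤
      ∏ i : K, ldeg A i / t := by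
  classical
  set S : K → Finset (Fin q) := fun i =>
    Finset.univ.filter (fun c : Fin q =>
      t ≤ (Finset.univ.filter (fun j : M => A i j ∧ r j = c)).card) with hS
  have hsub : (Finset.univ.filter (fun w : K → Fin q => ∀ i : K,
      t ≤ (Finset.univ.filter (fun j : M => A i j ∧ r j = w i)).card)) ⊆
      Fintype.piFinset S := by
    intro w hw
    simp only [Finset.mem_filter, Finset.mem_univ, true_and] at hw
    rw [Fintype.mem_piFinset]
    intro i
    simp [hS, hw i]
  refine le_trans (Finset.card_le_card hsub) ?_
  rw [Fintype.card_piFinset]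
  refine Finset.prod_le_prod' (fun i _ => ?_)
  rw [Nat.le_div_iff_mul_le ht]
  calc (S i).card * t = ∑ _c ∈ S i, t := by rw [Finset.sum_const, smul_eq_mul]
    _ ≤ ∑ c ∈ S i, (Finset.univ.filter (fun j : M => A i j ∧ r j = c)).card := by
        refine Finset.sum_le_sum (fun c hc => ?_)
        simpa [hS] using hc
    _ = ((S i).biUnion (fun c => Finset.univ.filter (fun j : M => A i j ∧ r j = c))).card := by
        rw [Finset.card_biUnion]
        intro a _ b _ hab
        refine Finset.disjoint_left.2 (fun j hj hj' => ?_)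
        simp only [Finset.mem_filter] at hj hj'
        exact hab (hj.2.2.symm.trans hj'.2.2)
    _ ≤ ldeg A i := by
        refine Finset.card_le_card ?_
        intro j hj
        simp only [Finset.mem_biUnion, Finset.mem_filter] at hj
        obtain ⟨c, _, _, hA, _⟩ := hj
        simp [ldeg, hA]
end

section
/- Sampling-without-replacement coupling bound: fix a population of k colored balls with color composition k*P_X and s <= k. Let L be the color-count vector of s draws with replacement (multinomial distribution Mult(s, P_X)) and L' the color-count vector of s draws without replacement (multivariate hypergeometric distribution). Then the total variation distance between the laws of L and L' is at most s^2/(2k). -/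
open Finset

/-- Generalized Vandermonde identity over `piAntidiag`. -/
theorem vandermonde_pi {ι : Type*} [DecidableEq ι] (π : ι → ℕ) (t : Finset ι) :
    ∀ n : ℕ, ∑ l ∈ t.piAntidiag n, ∏ i ∈ t, (π i).choose (l i)
      = (∑ i ∈ t, π i).choose n := by
  induction t using Finset.cons_induction with
  | empty =>
    intro n
    rw [Finset.piAntidiag_empty]
    cases n with
    | zero => simp
    | succ m => simp
  | cons i t hi ih =>
    intro n
    rw [Finset.piAntidiag_cons hi, Finset.sum_disjiUnion, Finset.sum_cons, Nat.add_choose_eq]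
    refine Finset.sum_congr rfl fun p hp => ?_
    rw [Finset.sum_map]
    have hterm : ∀ g ∈ t.piAntidiag p.2,
        ∏ j ∈ Finset.cons i t hi,
            (π j).choose ((addRightEmbedding fun u => if u = i then p.1 else 0) g j)
          = (π i).choose p.1 * ∏ j ∈ t, (π j).choose (g j) := by
      intro g hg
      rw [Finset.mem_piAntidiag] at hg
      have hgi : g i = 0 := by
        by_contra h; exact hi (hg.2 i h)
      rw [Finset.prod_cons]
      simp only [addRightEmbedding_apply]
      congr 1
      · simp [hgi]
      · refine Finset.prod_congr rfl fun j hj => ?_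
        have hji : j ≠ i := fun h => hi (h ▸ hj)
        simp [hji]
    rw [Finset.sum_congr rfl hterm, ← Finset.mul_sum, ih]

/-- Lower bound on the no-collision probability. -/
theorem desc_ratio (k : ℕ) (hk : 1 ≤ k) :
    ∀ s : ℕ, 1 - (∑ i ∈ Finset.range s, (i : ℝ)) / k ≤ (k.descFactorial s : ℝ) / k ^ s := by
  have hk0 : (0 : ℝ) < k := by exact_mod_cast hk
  intro s
  induction s with
  | zero => simp
  | succ s ih =>
    have hr_nonneg : (0 : ℝ) ≤ (k.descFactorial (s + 1) : ℝ) / k ^ (s + 1) := by positivity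
    rw [Finset.sum_range_succ]
    by_cases hsk : k ≤ s
    · have h1 : (1 : ℝ) ≤ (s : ℝ) / k := by
        rw [le_div_iff₀ hk0]
        exact_mod_cast by simpa using hsk
      have hA : (0 : ℝ) ≤ ∑ i ∈ Finset.range s, (i : ℝ) :=
        Finset.sum_nonneg fun i _ => by positivity
      have : 1 - (∑ i ∈ Finset.range s, (i : ℝ) + s) / k ≤ 0 := by
        rw [add_div]
        nlinarith [div_nonneg hA hk0.le]
      linarith
    · push_neg at hsk
      have hcast : ((k - s : ℕ) : ℝ) = (k : ℝ) - s := by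
        rw [Nat.cast_sub hsk.le]
      have hdesc : (k.descFactorial (s + 1) : ℝ)
          = ((k - s : ℕ) : ℝ) * (k.descFactorial s : ℝ) := by
        rw [Nat.descFactorial_succ]; push_cast; ring
      have hfac : (1 : ℝ) - (s : ℝ) / k ≤ ((k - s : ℕ) : ℝ) / k := by
        rw [hcast, sub_div, div_self hk0.ne']
      have hfac0 : (0 : ℝ) ≤ ((k - s : ℕ) : ℝ) / k := by positivity
      have hA : (0 : ℝ) ≤ (∑ i ∈ Finset.range s, (i : ℝ)) / k := by
        have : (0 : ℝ) ≤ ∑ i ∈ Finset.range s, (i : ℝ) :=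
          Finset.sum_nonneg fun i _ => by positivity
        positivity
      have hs0 : (0 : ℝ) ≤ (s : ℝ) / k := by positivity
      have step : (k.descFactorial (s + 1) : ℝ) / k ^ (s + 1)
          = ((k.descFactorial s : ℝ) / k ^ s) * (((k - s : ℕ) : ℝ) / k) := by
        rw [hdesc, pow_succ]
        field_simp
      have h2 : (1 - (∑ i ∈ Finset.range s, (i : ℝ)) / k) * (((k - s : ℕ) : ℝ) / k)
          ≤ ((k.descFactorial s : ℝ) / k ^ s) * (((k - s : ℕ) : ℝ) / k) :=
        mul_le_mul_of_nonneg_right ih hfac0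
      have hf_le1 : ((k - s : ℕ) : ℝ) / k ≤ 1 := by
        rw [div_le_one hk0, hcast]
        linarith
      have hAf : ((∑ i ∈ Finset.range s, (i : ℝ)) / k) * (((k - s : ℕ) : ℝ) / k)
          ≤ (∑ i ∈ Finset.range s, (i : ℝ)) / k :=
        mul_le_of_le_one_right hA hf_le1
      have h3 : 1 - ((∑ i ∈ Finset.range s, (i : ℝ)) / k + (s : ℝ) / k)
          ≤ (1 - (∑ i ∈ Finset.range s, (i : ℝ)) / k) * (((k - s : ℕ) : ℝ) / k) := by
        nlinarith
      rw [step, add_div]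
      linarith

/-- Coupling bound for sampling with vs. without replacement.  The population has
`k` balls of `q` colors with composition `π` (so `P_X j = π j / k`).  For `s ≤ k`
draws, the multinomial law of the color counts (with replacement) and the
multivariate hypergeometric law (without replacement) differ in total variation
by at most `s²/(2k)`; total variation is expressed in its sup-over-events form:
for every event (finite set of count vectors summing to `s`) the probabilities
differ by at most `s²/(2k)`. -/
theorem multinomial_hypergeometric_tv (q k s : ℕ) (hk : 1 ≤ k) (hs : s ≤ k)
    (π : Fin q → ℕ) (hπ : ∑ j, π j = k)
    (F : Finset (Fin q → ℕ)) (hF : ∀ l ∈ F, ∑ j, l j = s) :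
    |∑ l ∈ F,
        ((Nat.multinomial Finset.univ l : ℝ) * ∏ j, ((π j : ℝ) / k) ^ (l j)
          - (∏ j, ((π j).choose (l j) : ℝ)) / (k.choose s))| ≤
      (s : ℝ) ^ 2 / (2 * k) := by
  classical
  have hk0 : (0 : ℝ) < k := by exact_mod_cast hk
  set S : Finset (Fin q → ℕ) := Finset.piAntidiag Finset.univ s with hS
  have hFS : F ⊆ S := by
    intro l hl
    rw [hS, Finset.mem_piAntidiag]
    exact ⟨hF l hl, fun i _ => Finset.mem_univ i⟩
  set p : (Fin q → ℕ) → ℝ :=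
    fun l => (Nat.multinomial Finset.univ l : ℝ) * ∏ j, ((π j : ℝ) / k) ^ (l j) with hpdef
  set qf : (Fin q → ℕ) → ℝ :=
    fun l => (∏ j, ((π j).choose (l j) : ℝ)) / (k.choose s) with hqdef
  have hp_nonneg : ∀ l, 0 ≤ p l := fun l => by
    apply mul_nonneg (Nat.cast_nonneg _)
    exact Finset.prod_nonneg fun j _ => by positivity
  have hchoose_pos : (0 : ℝ) < (k.choose s : ℝ) := by
    exact_mod_cast Nat.choose_pos hs
  have hq_nonneg : ∀ l, 0 ≤ qf l := fun l => by
    apply div_nonneg _ hchoose_pos.le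
    exact Finset.prod_nonneg fun j _ => Nat.cast_nonneg _
  -- the multinomial probabilities sum to 1
  have hsumP : ∑ l ∈ S, p l = 1 := by
    have h := Finset.sum_pow_eq_sum_piAntidiag Finset.univ (fun j => (π j : ℝ) / k) s
    have hone : ∑ j, (π j : ℝ) / k = 1 := by
      rw [← Finset.sum_div]
      rw [show ∑ j, (π j : ℝ) = (k : ℝ) by exact_mod_cast congrArg Nat.cast hπ]
      exact div_self hk0.ne'
    rw [hone, one_pow] at h
    exact h.symm
  -- the hypergeometric probabilities sum to 1
  have hsumQ : ∑ l ∈ S, qf l = 1 := by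
    simp only [hqdef]
    rw [← Finset.sum_div]
    have hv : ∑ l ∈ S, ∏ j, ((π j).choose (l j) : ℝ) = (k.choose s : ℝ) := by
      have := vandermonde_pi π (Finset.univ : Finset (Fin q)) s
      rw [hπ] at this
      exact_mod_cast congrArg Nat.cast this
    rw [hv, div_self hchoose_pos.ne']
  set c : ℝ := (k.descFactorial s : ℝ) / k ^ s with hcdef
  have hc_nonneg : 0 ≤ c := by positivity
  have hc_le_one : c ≤ 1 := by
    rw [hcdef, div_le_one (by positivity)]
    exact_mod_cast Nat.descFactorial_le_pow k s
  -- key pointwise inequality: c * qf l ≤ p l on S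
  have key : ∀ l ∈ S, c * qf l ≤ p l := by
    intro l hl
    rw [hS, Finset.mem_piAntidiag] at hl
    have hls : ∑ j, l j = s := hl.1
    -- rewrite p l with a common denominator
    have hpform : p l = ((Nat.multinomial Finset.univ l : ℝ) * ∏ j, (π j : ℝ) ^ (l j)) / k ^ s :=
      by
      rw [hpdef]
      simp only [div_pow]
      rw [Finset.prod_div_distrib, Finset.prod_pow_eq_pow_sum, hls]
      ring
    have hqform : c * qf l = ((s.factorial : ℝ) * ∏ j, ((π j).choose (l j) : ℝ)) / k ^ s := by
      rw [hcdef, hqdef, Nat.descFactorial_eq_factorial_mul_choose]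
      push_cast
      field_simp
    rw [hpform, hqform]
    apply div_le_div_of_nonneg_right _ (by positivity)
    · have hnat : s.factorial * ∏ j, (π j).choose (l j)
          ≤ Nat.multinomial Finset.univ l * ∏ j, (π j) ^ (l j) := by
        calc s.factorial * ∏ j, (π j).choose (l j)
            = ((∏ j, (l j).factorial) * Nat.multinomial Finset.univ l)
                * ∏ j, (π j).choose (l j) := by
              rw [Nat.multinomial_spec, hls]
          _ = Nat.multinomial Finset.univ l * ∏ j, (π j).descFactorial (l j) := by
              rw [mul_comm (∏ j, (l j).factorial), mul_assoc, ← Finset.prod_mul_distrib]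
              congr 1
              refine Finset.prod_congr rfl fun j _ => ?_
              rw [Nat.descFactorial_eq_factorial_mul_choose]
          _ ≤ Nat.multinomial Finset.univ l * ∏ j, (π j) ^ (l j) := by
              apply Nat.mul_le_mul_left
              exact Finset.prod_le_prod' fun j _ => Nat.descFactorial_le_pow _ _
      exact_mod_cast hnat
  -- abbreviations for the two probabilities of the event F
  set P : ℝ := ∑ l ∈ F, p l with hP
  set Q : ℝ := ∑ l ∈ F, qf l with hQ
  have hQ_nonneg : 0 ≤ Q := Finset.sum_nonneg fun l _ => hq_nonneg l
  have hQ1 : Q ≤ 1 := by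
    rw [hQ, ← hsumQ]
    exact Finset.sum_le_sum_of_subset_of_nonneg hFS fun l _ _ => hq_nonneg l
  have hcQP : c * Q ≤ P := by
    rw [hP, hQ, Finset.mul_sum]
    exact Finset.sum_le_sum fun l hl => key l (hFS hl)
  have hPcQ : P - c * Q ≤ 1 - c := by
    have h := Finset.sum_le_sum_of_subset_of_nonneg hFS
      (f := fun l => p l - c * qf l) (fun l hl _ => sub_nonneg.2 (key l hl))
    have hSsum : ∑ l ∈ S, (p l - c * qf l) = 1 - c := by
      rw [Finset.sum_sub_distrib, hsumP, ← Finset.mul_sum, hsumQ, mul_one]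
    have hFsum : ∑ l ∈ F, (p l - c * qf l) = P - c * Q := by
      rw [Finset.sum_sub_distrib, ← Finset.mul_sum]
    rw [hFsum, hSsum] at h
    exact h
  have habs : |P - Q| ≤ 1 - c := by
    rw [abs_le]
    constructor
    · nlinarith
    · nlinarith
  -- collision probability bound
  have hcoll : 1 - c ≤ (s : ℝ) ^ 2 / (2 * k) := by
    have h1 := desc_ratio k hk s
    have h2 : (∑ i ∈ Finset.range s, (i : ℝ)) ≤ (s : ℝ) ^ 2 / 2 := by
      have h3 : ((∑ i ∈ Finset.range s, i : ℕ) : ℝ) * 2 = ((s * (s - 1) : ℕ) : ℝ) := by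
        exact_mod_cast congrArg Nat.cast (Finset.sum_range_id_mul_two s)
      have h4 : ((s * (s - 1) : ℕ) : ℝ) ≤ (s : ℝ) ^ 2 := by
        have : s * (s - 1) ≤ s ^ 2 := by
          calc s * (s - 1) ≤ s * s := Nat.mul_le_mul_left s (Nat.sub_le s 1)
            _ = s ^ 2 := (sq s).symm
        exact_mod_cast this
      have h5 : (∑ i ∈ Finset.range s, (i : ℝ)) = ((∑ i ∈ Finset.range s, i : ℕ) : ℝ) := by
        push_cast; rfl
      rw [h5]
      linarith
    have h6 : (∑ i ∈ Finset.range s, (i : ℝ)) / k ≤ (s : ℝ) ^ 2 / (2 * k) := by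
      rw [div_le_div_iff₀ hk0 (by positivity)]
      nlinarith
    rw [hcdef] at *
    linarith
  calc |∑ l ∈ F, (p l - qf l)| = |P - Q| := by rw [hP, hQ, Finset.sum_sub_distrib]
    _ ≤ 1 - c := habs
    _ ≤ (s : ℝ) ^ 2 / (2 * k) := hcoll
end
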